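/- (Sharpness, circle case) Let n be odd, let f₁, …, f_n be continuous 2π-periodic functions forming a Chebyshev system of order n on the circle, and let 0 ≤ t₁ < t₂ < ⋯ < t_{n+1} < 2π be given points. Then there exists a continuous 2π-periodic function f : ℝ → ℝ whose zero set in [0, 2π) is exactly {t₁, …, t_{n+1}}, which has alternating nonzero constant sign on the n+1 open circular arcs determined by these points (there is ε ∈ {1,−1} with ε·(−1)^i·f(t) > 0 on the arc from t_i to t_{i+1}, indices taken cyclically; this alternation is consistent since n+1 is even), and such that ∫_0^{2π} f(x)·f_j(x) dx = 0 for every j = 1, …, n. -/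

import Mathlib

open Real Set Filter

private lemma prod_sign_aux {m : ℕ} (f : Fin m → ℝ) (S : Finset (Fin m))
    (hpos : ∀ k, k ∉ S → 0 < f k) (hneg : ∀ k ∈ S, f k < 0) :
    0 < (-1 : ℝ) ^ S.card * ∏ k, f k := by
  have h1 : ∏ k, f k = (∏ k ∈ S, f k) * ∏ k ∈ Sᶜ, f k := (Finset.prod_mul_prod_compl S f).symm
  have h2 : ∏ k ∈ S, f k = (-1 : ℝ) ^ S.card * ∏ k ∈ S, (-f k) := by
    rw [← Finset.prod_const, ← Finset.prod_mul_distrib]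
    exact Finset.prod_congr rfl fun k _ => by ring
  have h3 : 0 < ∏ k ∈ S, (-f k) := Finset.prod_pos fun k hk => neg_pos.2 (hneg k hk)
  have h4 : 0 < ∏ k ∈ Sᶜ, f k := Finset.prod_pos fun k hk => hpos k (Finset.mem_compl.1 hk)
  have hsq : (-1 : ℝ) ^ S.card * (-1 : ℝ) ^ S.card = 1 := by
    rw [← pow_add]
    exact Even.neg_one_pow ⟨S.card, rfl⟩
  calc (0:ℝ) < ((-1:ℝ) ^ S.card * (-1:ℝ) ^ S.card) * ((∏ k ∈ S, (-f k)) * ∏ k ∈ Sᶜ, f k) := by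
        rw [hsq, one_mul]; exact mul_pos h3 h4
    _ = (-1:ℝ) ^ S.card * ∏ k, f k := by rw [h1, h2]; ring

private lemma sin_half_pos {u : ℝ} (h0 : 0 < u) (h2 : u < 2 * Real.pi) :
    0 < Real.sin (u / 2) :=
  Real.sin_pos_of_pos_of_lt_pi (by linarith) (by linarith)

private lemma sin_half_neg {u : ℝ} (h0 : u < 0) (h2 : -(2 * Real.pi) < u) :
    Real.sin (u / 2) < 0 :=
  Real.sin_neg_of_neg_of_neg_pi_lt (by linarith) (by linarith)

private lemma g_sign_arc {n : ℕ} (hodd : Odd n) (t : Fin (n + 1) → ℝ) (ht : StrictMono t)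
    (htmem : ∀ i, t i ∈ Set.Ico 0 (2 * Real.pi)) (i : Fin n) {s : ℝ}
    (hs : s ∈ Set.Ioo (t i.castSucc) (t i.succ)) :
    0 < (-1:ℝ) ^ ((i : ℕ) + 1) * ∏ k, Real.sin ((s - t k) / 2) := by
  have hkey : 0 < (-1:ℝ) ^ (Finset.Ici i.succ).card * ∏ k, Real.sin ((s - t k) / 2) := by
    apply prod_sign_aux
    · intro k hk
      have hk' : (k : ℕ) ≤ (i : ℕ) := by
        have h := Finset.mem_Ici.not.1 hk
        rw [Fin.le_def] at h
        simp only [Fin.val_succ] at h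
        omega
      have h1 : t k ≤ t i.castSucc := ht.monotone (by rw [Fin.le_def]; simpa using hk')
      have h2 := (htmem i.succ).2
      have h3 := (htmem k).1
      exact sin_half_pos (by linarith [hs.1]) (by linarith [hs.2])
    · intro k hk
      have hk' : t i.succ ≤ t k := ht.monotone (Finset.mem_Ici.1 hk)
      have h2 := (htmem k).2
      have h3 := (htmem i.castSucc).1
      exact sin_half_neg (by linarith [hs.2]) (by linarith [hs.1])
  have hcard : (Finset.Ici i.succ).card = n + 1 - ((i : ℕ) + 1) := by
    rw [Fin.card_Ici, Fin.val_succ]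
  have hpow : (-1:ℝ) ^ (n + 1 - ((i : ℕ) + 1)) = (-1:ℝ) ^ ((i : ℕ) + 1) := by
    have hin : (i : ℕ) < n := i.isLt
    have heq : n + 1 - ((i : ℕ) + 1) = n - (i : ℕ) := by omega
    rw [heq]
    rcases Nat.even_or_odd (i : ℕ) with he | ho
    · have h1 : Odd (n - (i : ℕ)) := Nat.Odd.sub_even (by omega) hodd he
      rw [h1.neg_one_pow, (he.add_one).neg_one_pow]
    · have h1 : Even (n - (i : ℕ)) := Nat.Odd.sub_odd hodd ho
      rw [h1.neg_one_pow, (ho.add_one).neg_one_pow]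
  rw [← hpow, ← hcard]
  exact hkey

private lemma g_last_pos {n : ℕ} (t : Fin (n + 1) → ℝ) (ht : StrictMono t)
    (htmem : ∀ i, t i ∈ Set.Ico 0 (2 * Real.pi)) {s : ℝ}
    (hs : s ∈ Set.Ioo (t (Fin.last n)) (t 0 + 2 * Real.pi)) :
    0 < ∏ k, Real.sin ((s - t k) / 2) := by
  apply Finset.prod_pos
  intro k _
  have h1 : t k ≤ t (Fin.last n) := ht.monotone (Fin.le_last k)
  have h2 : t 0 ≤ t k := ht.monotone (Fin.zero_le k)
  exact sin_half_pos (by linarith [hs.1]) (by linarith [hs.2])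

private lemma g_zero_iff {n : ℕ} (t : Fin (n + 1) → ℝ)
    (htmem : ∀ i, t i ∈ Set.Ico 0 (2 * Real.pi)) {s : ℝ}
    (hs : s ∈ Set.Ico 0 (2 * Real.pi)) :
    (∏ k, Real.sin ((s - t k) / 2) = 0 ↔ ∃ i, t i = s) := by
  rw [Finset.prod_eq_zero_iff]
  constructor
  · rintro ⟨k, -, hk⟩
    refine ⟨k, ?_⟩
    have h1 := (htmem k).1; have h2 := (htmem k).2
    have h3 := hs.1; have h4 := hs.2
    have h5 := (Real.sin_eq_zero_iff_of_lt_of_lt (x := (s - t k) / 2)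
      (by linarith) (by linarith)).1 hk
    linarith
  · rintro ⟨i, rfl⟩
    exact ⟨i, Finset.mem_univ i, by simp⟩

private lemma g_periodic {n : ℕ} (hodd : Odd n) (t : Fin (n + 1) → ℝ) :
    Function.Periodic (fun x => ∏ k, Real.sin ((x - t k) / 2)) (2 * Real.pi) := by
  intro x
  have h1 : ∀ k : Fin (n + 1), Real.sin ((x + 2 * Real.pi - t k) / 2)
      = -1 * Real.sin ((x - t k) / 2) := by
    intro k
    have h : (x + 2 * Real.pi - t k) / 2 = (x - t k) / 2 + Real.pi := by ring
    rw [h, Real.sin_add_pi]; ring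
  simp only
  rw [Finset.prod_congr rfl fun k _ => h1 k, Finset.prod_mul_distrib, Finset.prod_const,
    Finset.card_univ, Fintype.card_fin, (hodd.add_one).neg_one_pow, one_mul]

private lemma nonpos_left_of_Ioo {e : ℝ → ℝ} (he : Continuous e) {a b : ℝ} (hab : a < b)
    (h : ∀ x ∈ Set.Ioo a b, e x ≤ 0) : e a ≤ 0 := by
  have ht : Filter.Tendsto e (nhdsWithin a (Set.Ioi a)) (nhds (e a)) :=
    (he.tendsto a).mono_left nhdsWithin_le_nhds
  refine le_of_tendsto ht ?_
  filter_upwards [Ioo_mem_nhdsGT hab] with x hx using h x hx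

private lemma nonpos_right_of_Ioo {e : ℝ → ℝ} (he : Continuous e) {a b : ℝ} (hab : a < b)
    (h : ∀ x ∈ Set.Ioo a b, e x ≤ 0) : e b ≤ 0 := by
  have ht : Filter.Tendsto e (nhdsWithin b (Set.Iio b)) (nhds (e b)) :=
    (he.tendsto b).mono_left nhdsWithin_le_nhds
  refine le_of_tendsto ht ?_
  filter_upwards [Ioo_mem_nhdsLT hab] with x hx using h x hx

private lemma integral_window_pos {p : ℝ → ℝ} (hc : Continuous p)
    (hper : Function.Periodic p (2 * Real.pi)) (hnonneg : ∀ x, 0 ≤ p x)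
    {x₀ : ℝ} (hx₀ : 0 < p x₀) :
    0 < ∫ s in (0:ℝ)..(2 * Real.pi), p s := by
  have hshift : ∫ s in (0:ℝ)..(2 * Real.pi), p s
      = ∫ s in (x₀ - Real.pi)..(x₀ + Real.pi), p s := by
    have h := hper.intervalIntegral_add_eq (x₀ - Real.pi) 0
    rw [show x₀ - Real.pi + 2 * Real.pi = x₀ + Real.pi by ring, zero_add] at h
    exact h.symm
  obtain ⟨δ, hδpos, hδ⟩ : ∃ δ > 0, ∀ y, |y - x₀| < δ → 0 < p y := by
    have hca := hc.continuousAt (x := x₀)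
    rw [Metric.continuousAt_iff] at hca
    obtain ⟨δ, hδpos, hδ⟩ := hca (p x₀ / 2) (by linarith)
    refine ⟨δ, hδpos, fun y hy => ?_⟩
    have h1 := hδ (show dist y x₀ < δ by rwa [Real.dist_eq])
    rw [Real.dist_eq] at h1
    have h2 := abs_lt.1 h1
    linarith [h2.1]
  set δ' := min (δ / 2) Real.pi with hδ'def
  have hδ'pos : 0 < δ' := lt_min (by linarith) Real.pi_pos
  have hδ'le : δ' ≤ Real.pi := min_le_right _ _
  have hδ'lt : δ' < δ := lt_of_le_of_lt (min_le_left _ _) (by linarith)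
  have hint : ∀ a b : ℝ, IntervalIntegrable p MeasureTheory.volume a b :=
    fun a b => hc.intervalIntegrable a b
  have hmid : 0 < ∫ s in (x₀ - δ')..(x₀ + δ'), p s := by
    apply intervalIntegral.intervalIntegral_pos_of_pos_on (hint _ _) _ (by linarith)
    intro x hx
    exact hδ x (abs_lt.2 ⟨by linarith [hx.1], by linarith [hx.2]⟩)
  have hleft : 0 ≤ ∫ s in (x₀ - Real.pi)..(x₀ - δ'), p s :=
    intervalIntegral.integral_nonneg (by linarith) fun u _ => hnonneg u
  have hright : 0 ≤ ∫ s in (x₀ + δ')..(x₀ + Real.pi), p s :=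
    intervalIntegral.integral_nonneg (by linarith) fun u _ => hnonneg u
  have hsplit1 : (∫ s in (x₀ - Real.pi)..(x₀ - δ'), p s) + ∫ s in (x₀ - δ')..(x₀ + δ'), p s
      = ∫ s in (x₀ - Real.pi)..(x₀ + δ'), p s :=
    intervalIntegral.integral_add_adjacent_intervals (hint _ _) (hint _ _)
  have hsplit2 : (∫ s in (x₀ - Real.pi)..(x₀ + δ'), p s) + ∫ s in (x₀ + δ')..(x₀ + Real.pi), p s
      = ∫ s in (x₀ - Real.pi)..(x₀ + Real.pi), p s :=
    intervalIntegral.integral_add_adjacent_intervals (hint _ _) (hint _ _)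
  rw [hshift, ← hsplit2, ← hsplit1]
  linarith

private lemma exists_pos_weight (n : ℕ) (g : ℝ → ℝ) (hgc : Continuous g)
    (hgper : Function.Periodic g (2 * Real.pi))
    (F : Fin n → ℝ → ℝ) (hFc : ∀ j, Continuous (F j))
    (hFper : ∀ j, Function.Periodic (F j) (2 * Real.pi))
    (hng : ∀ c : Fin n → ℝ, c ≠ 0 → ∃ x, 0 < g x * ∑ j, c j * F j x) :
    ∃ w : ℝ → ℝ, Continuous w ∧ Function.Periodic w (2 * Real.pi) ∧ (∀ x, 0 < w x) ∧
      ∀ j, ∫ s in (0:ℝ)..(2 * Real.pi), (w s * g s) * F j s = 0 := by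
  classical
  set C : Set (Fin n → ℝ) :=
    {v | ∃ w : ℝ → ℝ, Continuous w ∧ Function.Periodic w (2 * Real.pi) ∧ (∀ x, 0 < w x) ∧
      v = fun j => ∫ s in (0:ℝ)..(2 * Real.pi), (w s * g s) * F j s} with hCdef
  have hintg : ∀ (w : ℝ → ℝ), Continuous w → ∀ j,
      IntervalIntegrable (fun s => (w s * g s) * F j s) MeasureTheory.volume 0 (2 * Real.pi) :=
    fun w hw j => ((hw.mul hgc).mul (hFc j)).intervalIntegrable 0 (2 * Real.pi)
  have hConv : Convex ℝ C := by
    rintro v₁ ⟨w₁, hw₁c, hw₁p, hw₁pos, rfl⟩ v₂ ⟨w₂, hw₂c, hw₂p, hw₂pos, rfl⟩ a b ha hb hab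
    refine ⟨fun x => a * w₁ x + b * w₂ x, (continuous_const.mul hw₁c).add (continuous_const.mul hw₂c), ?_, ?_, ?_⟩
    · intro x; simp only [hw₁p x, hw₂p x]
    · intro x
      show 0 < a * w₁ x + b * w₂ x
      rcases eq_or_lt_of_le ha with ha0 | ha0
      · have hb1 : b = 1 := by linarith
        simp [← ha0, hb1, hw₂pos x]
      · have h1 : 0 ≤ b * w₂ x := mul_nonneg hb (hw₂pos x).le
        have h2 := mul_pos ha0 (hw₁pos x)
        linarith
    · funext j
      simp only [Pi.add_apply, Pi.smul_apply, smul_eq_mul]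
      rw [show (fun s => ((a * w₁ s + b * w₂ s) * g s) * F j s)
          = fun s => a * ((w₁ s * g s) * F j s) + b * ((w₂ s * g s) * F j s) by
            funext s; ring]
      rw [intervalIntegral.integral_add ((hintg w₁ hw₁c j).const_mul a)
        ((hintg w₂ hw₂c j).const_mul b),
        intervalIntegral.integral_const_mul, intervalIntegral.integral_const_mul]
  have hSmul : ∀ v ∈ C, ∀ a : ℝ, 0 < a → a • v ∈ C := by
    rintro v ⟨w, hwc, hwp, hwpos, rfl⟩ a ha
    refine ⟨fun x => a * w x, continuous_const.mul hwc, fun x => by simp only [hwp x],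
      fun x => mul_pos ha (hwpos x), ?_⟩
    funext j
    simp only [Pi.smul_apply, smul_eq_mul]
    rw [show (fun s => ((a * w s) * g s) * F j s)
        = fun s => a * ((w s * g s) * F j s) by funext s; ring,
      intervalIntegral.integral_const_mul]
  have honeC : (fun j => ∫ s in (0:ℝ)..(2 * Real.pi), ((1:ℝ) * g s) * F j s) ∈ C :=
    ⟨fun _ => (1:ℝ), continuous_const, fun _ => rfl, fun _ => one_pos, rfl⟩
  have h0closure : (0 : Fin n → ℝ) ∈ closure C := by
    set V₀ : Fin n → ℝ := fun j => ∫ s in (0:ℝ)..(2 * Real.pi), ((1:ℝ) * g s) * F j s with hV₀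
    have hmem : ∀ k : ℕ, (1 / ((k : ℝ) + 1)) • V₀ ∈ C := fun k =>
      hSmul V₀ honeC _ (by positivity)
    have htend : Filter.Tendsto (fun k : ℕ => (1 / ((k : ℝ) + 1)) • V₀) Filter.atTop
        (nhds ((0:ℝ) • V₀)) :=
      tendsto_one_div_add_atTop_nhds_zero_nat.smul_const V₀
    rw [zero_smul] at htend
    exact mem_closure_of_tendsto htend (Filter.Eventually.of_forall hmem)
  have hclosC : closure C = Set.univ := by
    by_contra hne
    obtain ⟨p, hp⟩ := (Set.ne_univ_iff_exists_notMem _).1 hne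
    obtain ⟨φ, u, hφ, hu⟩ := geometric_hahn_banach_closed_point hConv.closure
      isClosed_closure hp
    have hu0 : 0 < u := by
      have h := hφ 0 h0closure
      simpa using h
    have hφle : ∀ v ∈ C, φ v ≤ 0 := by
      intro v hv
      by_contra hcon
      push_neg at hcon
      have hmem := hSmul v hv ((u + 1) / φ v) (div_pos (by linarith) hcon)
      have h := hφ _ (subset_closure hmem)
      rw [map_smul, smul_eq_mul, div_mul_cancel₀] at h
      · linarith
      · exact ne_of_gt hcon
    set c : Fin n → ℝ := fun i => φ (fun j => if i = j then 1 else 0) with hcdef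
    have hrep : ∀ v : Fin n → ℝ, φ v = ∑ i, v i * c i := by
      intro v
      have h := LinearMap.pi_apply_eq_sum_univ (φ : (Fin n → ℝ) →ₗ[ℝ] ℝ) v
      simpa [smul_eq_mul] using h
    have hcne : c ≠ 0 := by
      intro hc0
      have h : φ p = 0 := by rw [hrep p, hc0]; simp
      rw [h] at hu; linarith
    obtain ⟨x₀, hx₀⟩ := hng c hcne
    set h : ℝ → ℝ := fun x => ∑ j, c j * F j x with hhdef
    have hhc : Continuous h := continuous_finset_sum _ fun j _ => continuous_const.mul (hFc j)
    have hhper : Function.Periodic h (2 * Real.pi) := fun x =>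
      Finset.sum_congr rfl fun j _ => by rw [hFper j x]
    set q : ℝ → ℝ := fun x => g x * h x with hqdef
    have hqc : Continuous q := hgc.mul hhc
    have hqper : Function.Periodic q (2 * Real.pi) := fun x => by
      simp only [hqdef, hgper x, hhper x]
    have hkey : ∀ w : ℝ → ℝ, Continuous w → Function.Periodic w (2 * Real.pi) →
        (∀ x, 0 < w x) → (∫ s in (0:ℝ)..(2 * Real.pi), w s * q s) ≤ 0 := by
      intro w hwc hwp hwpos
      have hvC : (fun j => ∫ s in (0:ℝ)..(2 * Real.pi), (w s * g s) * F j s) ∈ C :=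
        ⟨w, hwc, hwp, hwpos, rfl⟩
      have h1 : (∑ j, (∫ s in (0:ℝ)..(2 * Real.pi), (w s * g s) * F j s) * c j) ≤ 0 := by
        have h0 := hφle _ hvC
        rw [hrep] at h0
        exact h0
      calc ∫ s in (0:ℝ)..(2 * Real.pi), w s * q s
          = ∫ s in (0:ℝ)..(2 * Real.pi), ∑ j, ((w s * g s) * F j s) * c j := by
            apply intervalIntegral.integral_congr
            intro s _
            simp only [hqdef, hhdef, Finset.mul_sum]
            exact Finset.sum_congr rfl fun j _ => by ring
        _ = ∑ j, ∫ s in (0:ℝ)..(2 * Real.pi), ((w s * g s) * F j s) * c j :=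
            intervalIntegral.integral_finset_sum
              fun j _ => (hintg w hwc j).mul_const (c j)
        _ = ∑ j, (∫ s in (0:ℝ)..(2 * Real.pi), (w s * g s) * F j s) * c j :=
            Finset.sum_congr rfl fun j _ => by rw [intervalIntegral.integral_mul_const]
        _ ≤ 0 := h1
    have hq0 : 0 < q x₀ := hx₀
    set pf : ℝ → ℝ := fun x => max (q x) 0 with hpdef
    have hpc : Continuous pf := hqc.max continuous_const
    have hpper : Function.Periodic pf (2 * Real.pi) := fun x => by simp only [hpdef, hqper x]
    have hpnonneg : ∀ x, 0 ≤ pf x := fun x => le_max_right _ _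
    have hpq : ∀ x, pf x * q x = pf x ^ 2 := by
      intro x
      rcases le_or_gt (q x) 0 with hle | hlt
      · simp only [hpdef]; rw [max_eq_right hle]; ring
      · simp only [hpdef]; rw [max_eq_left hlt.le]; ring
    have hp0 : 0 < pf x₀ := lt_max_iff.2 (Or.inl hq0)
    have hA : 0 < ∫ s in (0:ℝ)..(2 * Real.pi), pf s ^ 2 :=
      integral_window_pos (hpc.pow 2) (fun x => by simp only [hpper x])
        (fun x => sq_nonneg _) (pow_pos hp0 2)
    set A := ∫ s in (0:ℝ)..(2 * Real.pi), pf s ^ 2 with hAdef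
    set B := ∫ s in (0:ℝ)..(2 * Real.pi), q s with hBdef
    set ε := A / (2 * (|B| + 1)) with hεdef
    have hεpos : 0 < ε := div_pos hA (by positivity)
    have hw := hkey (fun x => pf x + ε) (hpc.add continuous_const)
      (fun x => by simp only [hpper x]) (fun x => by have := hpnonneg x; show 0 < pf x + ε; linarith)
    have hcalc : (∫ s in (0:ℝ)..(2 * Real.pi), (pf s + ε) * q s) = A + ε * B := by
      rw [show (fun s => (pf s + ε) * q s) = fun s => pf s ^ 2 + ε * q s by
        funext s; rw [← hpq s]; ring]
      rw [intervalIntegral.integral_add (f := fun s => pf s ^ 2) (g := fun s => ε * q s)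
        ((hpc.pow 2).intervalIntegrable _ _)
        ((continuous_const.mul hqc).intervalIntegrable _ _),
        intervalIntegral.integral_const_mul]
    rw [hcalc] at hw
    have hB1 : -(ε * |B|) ≤ ε * B := by nlinarith [neg_abs_le B, hεpos.le]
    have hB2 : ε * (|B| + 1) = A / 2 := by
      have hBpos : (0:ℝ) < |B| + 1 := by positivity
      rw [hεdef]
      field_simp
    have hB3 : ε * |B| ≤ A / 2 := by nlinarith [hεpos.le, hB2]
    linarith
  have hspan : affineSpan ℝ C = ⊤ := by
    have h1 : closure C ⊆ (affineSpan ℝ C : Set (Fin n → ℝ)) :=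
      closure_minimal (subset_affineSpan ℝ C)
        (affineSpan ℝ C).closed_of_finiteDimensional
    rw [hclosC] at h1
    exact eq_top_iff.2 fun x _ => h1 (Set.mem_univ x)
  obtain ⟨x, hx⟩ := (hConv.interior_nonempty_iff_affineSpan_eq_top).2 hspan
  have hz : -x ∈ closure C := by rw [hclosC]; trivial
  have h0C : (0 : Fin n → ℝ) ∈ C := by
    have h00 := hConv.combo_interior_closure_mem_interior hx hz one_half_pos
      (le_of_lt one_half_pos) (by norm_num)
    rw [show (1/2 : ℝ) • x + (1/2 : ℝ) • (-x) = 0 by rw [smul_neg]; abel] at h00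
    exact interior_subset h00
  obtain ⟨w, hwc, hwp, hwpos, hv⟩ := h0C
  exact ⟨w, hwc, hwp, hwpos, fun j => by simpa using (congrFun hv j).symm⟩
private lemma cheb_no_semidef {n : ℕ} (hodd : Odd n) (F : Fin n → ℝ → ℝ)
    (hFc : ∀ j, Continuous (F j)) (hFper : ∀ j, Function.Periodic (F j) (2 * Real.pi))
    (hcheb : ∀ c : Fin n → ℝ, c ≠ 0 →
      {x ∈ Set.Ico 0 (2 * Real.pi) | ∑ j, c j * F j x = 0}.encard ≤ (n - 1 : ℕ))
    (t : Fin (n + 1) → ℝ) (ht : StrictMono t) (htmem : ∀ i, t i ∈ Set.Ico 0 (2 * Real.pi))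
    (c : Fin n → ℝ) (hc : c ≠ 0) :
    ∃ x, 0 < (∏ k, Real.sin ((x - t k) / 2)) * ∑ j, c j * F j x := by
  by_contra hcon
  push_neg at hcon
  set g : ℝ → ℝ := fun x => ∏ k, Real.sin ((x - t k) / 2) with hgdef
  set h : ℝ → ℝ := fun x => ∑ j, c j * F j x with hhdef
  have hhc : Continuous h := continuous_finset_sum _ fun j _ => continuous_const.mul (hFc j)
  have hhper : Function.Periodic h (2 * Real.pi) := fun x =>
    Finset.sum_congr rfl fun j _ => by rw [hFper j x]
  have hle : ∀ x, g x * h x ≤ 0 := hcon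
  have harcL : t (Fin.last n) < t 0 + 2 * Real.pi := by
    have h1 := (htmem (Fin.last n)).2; have h2 := (htmem 0).1; linarith
  have hzero : ∀ i, h (t i) = 0 := by
    intro i
    have hR : (-1:ℝ) ^ ((i : ℕ) + 1) * h (t i) ≤ 0 := by
      rcases lt_or_eq_of_le (Nat.lt_succ_iff.mp i.isLt) with hi | hi
      · set i' : Fin n := ⟨(i : ℕ), hi⟩ with hi'def
        have hci : i'.castSucc = i := by ext; simp [hi'def]
        have harc : t i'.castSucc < t i'.succ := ht (by rw [Fin.lt_def]; simp [hi'def])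
        have hIoo : ∀ x ∈ Set.Ioo (t i'.castSucc) (t i'.succ),
            (-1:ℝ) ^ ((i : ℕ) + 1) * h x ≤ 0 := by
          intro x hx
          have hg := g_sign_arc hodd t ht htmem i' hx
          have hval : ((i' : ℕ) + 1) = (i : ℕ) + 1 := by simp [hi'def]
          rw [hval] at hg
          rcases neg_one_pow_eq_or ℝ ((i : ℕ) + 1) with hσ | hσ <;>
            rw [hσ] at hg ⊢ <;> nlinarith [hle x]
        have hend := nonpos_left_of_Ioo (continuous_const.mul hhc) harc hIoo
        rwa [hci] at hend
      · have hIoo : ∀ x ∈ Set.Ioo (t (Fin.last n)) (t 0 + 2 * Real.pi),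
            (-1:ℝ) ^ ((i : ℕ) + 1) * h x ≤ 0 := by
          intro x hx
          have hg := g_last_pos t ht htmem hx
          have hpow : (-1:ℝ) ^ ((i : ℕ) + 1) = 1 :=
            Even.neg_one_pow (by rw [hi]; exact hodd.add_one)
          rw [hpow, one_mul]
          nlinarith [hle x]
        have hlast : i = Fin.last n := by ext; exact hi
        have hend := nonpos_left_of_Ioo (continuous_const.mul hhc) harcL hIoo
        have hti : t i = t (Fin.last n) := by rw [hlast]
        rw [hti]
        exact hend
    have hL : (-1:ℝ) ^ (i : ℕ) * h (t i) ≤ 0 := by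
      rcases Nat.eq_zero_or_pos (i : ℕ) with hi | hi
      · have hIoo : ∀ x ∈ Set.Ioo (t (Fin.last n)) (t 0 + 2 * Real.pi), h x ≤ 0 := by
          intro x hx
          have hg := g_last_pos t ht htmem hx
          nlinarith [hle x]
        have h1 : h (t 0 + 2 * Real.pi) ≤ 0 := nonpos_right_of_Ioo hhc harcL hIoo
        have h2 : h (t 0 + 2 * Real.pi) = h (t 0) := hhper (t 0)
        have hieq : i = 0 := by ext; exact hi
        rw [hieq]
        simpa using h2 ▸ h1
      · have hin : (i : ℕ) - 1 < n := by omega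
        set j : Fin n := ⟨(i : ℕ) - 1, hin⟩ with hjdef
        have hjs : j.succ = i := by ext; simp [hjdef]; omega
        have harc : t j.castSucc < t j.succ := ht (by rw [Fin.lt_def]; simp [hjdef])
        have hIoo : ∀ x ∈ Set.Ioo (t j.castSucc) (t j.succ),
            (-1:ℝ) ^ ((j : ℕ) + 1) * h x ≤ 0 := by
          intro x hx
          have hg := g_sign_arc hodd t ht htmem j hx
          rcases neg_one_pow_eq_or ℝ ((j : ℕ) + 1) with hσ | hσ <;>
            rw [hσ] at hg ⊢ <;> nlinarith [hle x]
        have h1 := nonpos_right_of_Ioo (continuous_const.mul hhc) harc hIoo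
        have hpow : ((j : ℕ) + 1) = (i : ℕ) := by simp [hjdef]; omega
        rw [hjs, hpow] at h1
        exact h1
    have hpow : (-1:ℝ) ^ ((i : ℕ) + 1) = -((-1:ℝ) ^ (i : ℕ)) := by rw [pow_succ]; ring
    rw [hpow] at hR
    rcases neg_one_pow_eq_or ℝ (i : ℕ) with h1 | h1 <;> rw [h1] at hR hL <;> linarith
  have hsub : Set.range t ⊆ {x ∈ Set.Ico 0 (2 * Real.pi) | ∑ j, c j * F j x = 0} := by
    rintro x ⟨i, rfl⟩
    exact ⟨htmem i, hzero i⟩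
  have hcard : ((n + 1 : ℕ) : ℕ∞) ≤ ((n - 1 : ℕ) : ℕ∞) := by
    have h1 : (Set.range t).encard = ((n + 1 : ℕ) : ℕ∞) := by
      rw [← Set.image_univ, Set.InjOn.encard_image ht.injective.injOn]
      rw [Set.encard_univ]
      simp
    calc ((n + 1 : ℕ) : ℕ∞) = (Set.range t).encard := h1.symm
      _ ≤ _ := Set.encard_mono hsub
      _ ≤ ((n - 1 : ℕ) : ℕ∞) := hcheb c hc
  have hfin : (n + 1 : ℕ) ≤ (n - 1 : ℕ) := by exact_mod_cast hcard
  omega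

/-- Sharpness (circle case): given a Chebyshev system of odd order `n` on the circle
and points `0 ≤ t₁ < ⋯ < t_{n+1} < 2π`, there is a continuous `2π`-periodic function
whose zero set in `[0,2π)` is exactly these points, with alternating nonzero constant
sign on the `n+1` open circular arcs they determine (the last arc being the one from
`t_{n+1}` to `t₁ + 2π`), which is orthogonal (weight `1`) to the system. -/
theorem exists_orthogonal_with_prescribed_sign_changes_circle
    (n : ℕ) (hodd : Odd n) (F : Fin n → ℝ → ℝ)
    (hFc : ∀ j, Continuous (F j))
    (hFper : ∀ j, Function.Periodic (F j) (2 * Real.pi))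
    (hcheb : ∀ c : Fin n → ℝ, c ≠ 0 →
      {x ∈ Set.Ico 0 (2 * Real.pi) | ∑ j, c j * F j x = 0}.encard ≤ (n - 1 : ℕ))
    (t : Fin (n + 1) → ℝ) (ht : StrictMono t)
    (htmem : ∀ i, t i ∈ Set.Ico 0 (2 * Real.pi)) :
    ∃ f : ℝ → ℝ, Continuous f ∧ Function.Periodic f (2 * Real.pi) ∧
      (∀ s ∈ Set.Ico 0 (2 * Real.pi), (f s = 0 ↔ ∃ i, t i = s)) ∧
      (∃ ε : ℝ, (ε = 1 ∨ ε = -1) ∧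
        (∀ i : Fin n, ∀ s ∈ Set.Ioo (t i.castSucc) (t i.succ),
          0 < ε * (-1) ^ (i : ℕ) * f s) ∧
        (∀ s ∈ Set.Ioo (t (Fin.last n)) (t 0 + 2 * Real.pi),
          0 < ε * (-1) ^ n * f s)) ∧
      ∀ j, ∫ s in (0:ℝ)..(2 * Real.pi), f s * F j s = 0 := by
  classical
  have hgc : Continuous (fun x : ℝ => ∏ k, Real.sin ((x - t k) / 2)) :=
    continuous_finset_prod _ fun k _ => by
      exact Real.continuous_sin.comp
        (Continuous.div_const (continuous_id.sub continuous_const) 2)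
  obtain ⟨w, hwc, hwper, hwpos, hwint⟩ :=
    exists_pos_weight n (fun x => ∏ k, Real.sin ((x - t k) / 2)) hgc
      (g_periodic hodd t) F hFc hFper
      (fun c hc => cheb_no_semidef hodd F hFc hFper hcheb t ht htmem c hc)
  refine ⟨fun x => w x * ∏ k, Real.sin ((x - t k) / 2), hwc.mul hgc,
    hwper.mul (g_periodic hodd t), ?_, ⟨-1, Or.inr rfl, ?_, ?_⟩, hwint⟩
  · intro s hs
    have h1 : w s * (∏ k, Real.sin ((s - t k) / 2)) = 0
        ↔ (∏ k, Real.sin ((s - t k) / 2)) = 0 := by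
      rw [mul_eq_zero]
      simp [(hwpos s).ne']
    exact h1.trans (g_zero_iff t htmem hs)
  · intro i s hsIoo
    have hg := g_sign_arc hodd t ht htmem i hsIoo
    have heq : (-1:ℝ) * (-1) ^ (i : ℕ) * (w s * ∏ k, Real.sin ((s - t k) / 2))
        = w s * ((-1:ℝ) ^ ((i : ℕ) + 1) * ∏ k, Real.sin ((s - t k) / 2)) := by
      rw [pow_succ]; ring
    show 0 < (-1:ℝ) * (-1) ^ (i : ℕ) * (w s * ∏ k, Real.sin ((s - t k) / 2))
    rw [heq]
    exact mul_pos (hwpos s) hg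
  · intro s hsIoo
    have hg := g_last_pos t ht htmem hsIoo
    have hpow : (-1:ℝ) * (-1) ^ n = 1 := by
      have h1 : (-1:ℝ) ^ (n + 1) = 1 := Even.neg_one_pow hodd.add_one
      rw [pow_succ] at h1
      linarith
    show 0 < (-1:ℝ) * (-1) ^ n * (w s * ∏ k, Real.sin ((s - t k) / 2))
    rw [hpow, one_mul]
    exact mul_pos (hwpos s) hg
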